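/- In a Grothendieck-Verdier category C with dualising object K and dualising functor D, for every invertible object U the object K ⊗ U⁻¹ is again a dualising object of C. -/

import Mathlib

open CategoryTheory MonoidalCategory

/-- In a Grothendieck–Verdier category `C` with dualising object `K`
(dualising functor `Dfun`, an anti-equivalence, representing `Hom(- ⊗ Y, K)` naturally),
for every invertible object `U` (with inverse `V`) the object `K ⊗ V = K ⊗ U⁻¹` is
again a dualising object of `C`. -/
theorem stmt1 {C : Type*} [Category C] [MonoidalCategory C]
    (K : C) (Dfun : Cᵒᵖ ⥤ C) (hDequiv : Dfun.IsEquivalence)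
    (d : ∀ X Y : C, (X ⊗ Y ⟶ K) ≃ (X ⟶ Dfun.obj (Opposite.op Y)))
    (dnat : ∀ (Y : C) {X X' : C} (f : X' ⟶ X) (g : X ⊗ Y ⟶ K),
      d X' Y (f ▷ Y ≫ g) = f ≫ d X Y g)
    (U V : C) (huv : U ⊗ V ≅ 𝟙_ C) (hvu : V ⊗ U ≅ 𝟙_ C) :
    ∃ D' : Cᵒᵖ ⥤ C, D'.IsEquivalence ∧
      ∃ d' : ∀ X Y : C, (X ⊗ Y ⟶ K ⊗ V) ≃ (X ⟶ D'.obj (Opposite.op Y)),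
        ∀ (Y : C) {X X' : C} (f : X' ⟶ X) (g : X ⊗ Y ⟶ K ⊗ V),
          d' X' Y (f ▷ Y ≫ g) = f ≫ d' X Y g := by
  classical
  -- `- ⊗ U` is an equivalence with quasi-inverse `- ⊗ V`
  let e : C ≌ C := CategoryTheory.Equivalence.mk (tensorRight U) (tensorRight V)
    (NatIso.ofComponents
      (fun A => (ρ_ A).symm ≪≫ (whiskerLeftIso A huv).symm ≪≫ (α_ A U V).symm)
      (by
        intro A B f
        simp only [Functor.id_obj, Functor.comp_obj, Functor.flip_obj_obj, curriedTensor_obj_obj, Iso.trans_hom,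
          Iso.symm_hom, whiskerLeftIso_inv, Functor.id_map, Functor.comp_map, Functor.flip_obj_map, curriedTensor_map_app,
          Category.assoc]
        rw [← associator_inv_naturality_left, whisker_exchange_assoc]
        simp))
    (NatIso.ofComponents
      (fun A => α_ A V U ≪≫ whiskerLeftIso A hvu ≪≫ ρ_ A)
      (by
        intro A B f
        simp only [Functor.comp_obj, Functor.flip_obj_obj, curriedTensor_obj_obj, Functor.id_obj, Iso.trans_hom,
          whiskerLeftIso_hom, Functor.comp_map, Functor.flip_obj_map, curriedTensor_map_app, Functor.id_map, Category.assoc]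
        rw [associator_naturality_left_assoc, ← whisker_exchange_assoc]
        simp))
  haveI hE : (tensorRight U).IsEquivalence := e.isEquivalence_functor
  haveI := hDequiv
  refine ⟨(tensorRight U).op ⋙ Dfun, inferInstance, ?_⟩
  let FF := Functor.FullyFaithful.ofFullyFaithful (tensorRight U)
  let ι : (K ⊗ V) ⊗ U ≅ K := α_ K V U ≪≫ whiskerLeftIso K hvu ≪≫ ρ_ K
  refine ⟨fun X Y =>
    (FF.homEquiv.trans ((α_ X Y U).homCongr ι)).trans (d X (Y ⊗ U)), ?_⟩
  intro Y X X' f g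
  show d X' (Y ⊗ U) ((α_ X' Y U).inv ≫ (tensorRight U).map (f ▷ Y ≫ g) ≫ ι.hom)
      = f ≫ d X (Y ⊗ U) ((α_ X Y U).inv ≫ (tensorRight U).map g ≫ ι.hom)
  have h1 : (α_ X' Y U).inv ≫ (tensorRight U).map (f ▷ Y ≫ g) ≫ ι.hom
      = f ▷ (Y ⊗ U) ≫ ((α_ X Y U).inv ≫ (tensorRight U).map g ≫ ι.hom) := by
    simp [ι]
  rw [h1, dnat]
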